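/- arXiv:2005.10139 — 3 statements merged into one kernel-verified Lean document; each statement's English description precedes it below -/
import Mathlib

section
/- If X = {g, g'} is a Green hyperwalk step of type (G3) in a Brauer configuration, then the polygons π(g) and π(g') are distinct truncated edges. -/
/-- A Brauer configuration: finite sets of vertices and germs, a partition of the
germs into polygons (recorded by the polygon map `pg`), a vertex map `vx`, a
successor permutation `succ` (the cyclic ordering of the germs around each vertex),
and a multiplicity function `mult`. -/
structure BrauerConfig where
  V : Type
  G : Type
  P : Type
  [fintypeV : Fintype V]
  [fintypeG : Fintype G]
  [fintypeP : Fintype P]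
  [decV : DecidableEq V]
  [decG : DecidableEq G]
  [decP : DecidableEq P]
  /-- the polygon containing a germ -/
  pg : G → P
  pg_surj : Function.Surjective pg
  /-- the vertex at which a germ sits -/
  vx : G → V
  /-- the successor permutation of the cyclic orderings around the vertices -/
  succ : Equiv.Perm G
  vx_succ : ∀ g, vx (succ g) = vx g
  /-- the multiplicity function -/
  mult : V → ℕ
  mult_pos : ∀ v, 0 < mult v
  /-- every polygon has at least two germs -/
  two_le_poly : ∀ p : P, 2 ≤ (Finset.univ.filter (fun g => pg g = p)).card
  /-- no polygon of size > 2 contains a germ at a truncated vertex -/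
  no_big_truncated : ∀ g : G,
    2 < (Finset.univ.filter (fun h => pg h = pg g)).card →
    ¬((Finset.univ.filter (fun h => vx h = vx g)).card = 1 ∧ mult (vx g) = 1)

namespace BrauerConfig

attribute [instance] fintypeV fintypeG fintypeP decV decG decP

variable (χ : BrauerConfig)

/-- The valency of a vertex. -/
def val (v : χ.V) : ℕ := (Finset.univ.filter (fun g => χ.vx g = v)).card

/-- The set of germs of a polygon. -/
def polyF (p : χ.P) : Finset χ.G := Finset.univ.filter (fun g => χ.pg g = p)

/-- The number of germs of a polygon. -/
def polyCard (p : χ.P) : ℕ := (χ.polyF p).card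

/-- A vertex is truncated if it has valency one and multiplicity one. -/
def TruncatedVx (v : χ.V) : Prop := χ.val v = 1 ∧ χ.mult v = 1

/-- A truncated edge: a polygon with exactly two germs, one of which sits at a
truncated vertex. -/
def TruncatedEdge (p : χ.P) : Prop :=
  χ.polyCard p = 2 ∧ ∃ g, χ.pg g = p ∧ χ.TruncatedVx (χ.vx g)

/-- Green hyperwalk step of type (G1): a singleton. -/
def IsG1 (X : Finset χ.G) : Prop := X.card = 1

/-- Green hyperwalk step of type (G2). -/
def IsG2 (X : Finset χ.G) : Prop :=
  X.card = 2 ∧ (∃ p : χ.P, X ⊂ χ.polyF p) ∧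
    ∀ g ∈ X, χ.mult (χ.vx g) = 1 ∧ χ.val (χ.vx g) = 2 ∧
      χ.TruncatedEdge (χ.pg (χ.succ g))

/-- Green hyperwalk step of type (G3). -/
def IsG3 (X : Finset χ.G) : Prop :=
  ∃ g g' : χ.G, X = {g, g'} ∧ χ.IsG2 ({χ.succ g, χ.succ g'} : Finset χ.G)

/-- A Green hyperwalk step: a nonempty proper subset of the germs satisfying
one of (G1), (G2), (G3). -/
def IsStep (X : Finset χ.G) : Prop :=
  X.Nonempty ∧ X ≠ Finset.univ ∧ (χ.IsG1 X ∨ χ.IsG2 X ∨ χ.IsG3 X)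

/-- One step of the Green hyperwalk recursion. -/
noncomputable def next (X : Finset χ.G) : Finset χ.G := by
  classical
  exact
    if χ.IsStep X then
      let Y : Finset χ.G :=
        if χ.IsG3 X then X.image χ.succ
        else ((X.biUnion (fun g => χ.polyF (χ.pg g))) \ X).image χ.succ
      if χ.IsStep Y then Y else ∅
    else ∅

/-- The Green hyperwalk starting at `X0`. -/
noncomputable def walk (X0 : Finset χ.G) (n : ℕ) : Finset χ.G := χ.next^[n] X0

/-- A Green hyperwalk terminates if it eventually becomes empty. -/
def Terminates (X0 : Finset χ.G) : Prop := ∃ k, χ.walk X0 k = ∅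

/-- A Green hyperwalk is periodic if it is (purely) periodic of some period `k > 0`. -/
def IsPeriodic (X0 : Finset χ.G) : Prop :=
  ∃ k, 0 < k ∧ ∀ i, χ.walk X0 (i + k) = χ.walk X0 i

end BrauerConfig

open BrauerConfig in
/-- At a vertex of valency 2, the successor permutation is an involution. -/
theorem succ_succ_of_val_two (χ : BrauerConfig) (g : χ.G)
    (hv : χ.val (χ.vx g) = 2) : χ.succ (χ.succ g) = g := by
  classical
  by_cases h1 : χ.succ g = g
  · rw [h1, h1]
  by_contra h2
  have hF : ({g, χ.succ g, χ.succ (χ.succ g)} : Finset χ.G) ⊆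
      Finset.univ.filter (fun h => χ.vx h = χ.vx g) := by
    intro x hx
    simp only [Finset.mem_insert, Finset.mem_singleton] at hx
    simp only [Finset.mem_filter, Finset.mem_univ, true_and]
    rcases hx with rfl | rfl | rfl
    · rfl
    · exact χ.vx_succ g
    · rw [χ.vx_succ, χ.vx_succ]
  have h3 : χ.succ (χ.succ g) ≠ χ.succ g := fun h => h1 (χ.succ.injective h)
  have hcard : ({g, χ.succ g, χ.succ (χ.succ g)} : Finset χ.G).card = 3 := by
    have e1 : g ∉ ({χ.succ g, χ.succ (χ.succ g)} : Finset χ.G) := by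
      simp only [Finset.mem_insert, Finset.mem_singleton]
      push_neg
      exact ⟨Ne.symm h1, Ne.symm h2⟩
    have e2 : χ.succ g ∉ ({χ.succ (χ.succ g)} : Finset χ.G) := by
      simpa using Ne.symm h3
    rw [Finset.card_insert_of_notMem e1, Finset.card_insert_of_notMem e2,
      Finset.card_singleton]
  have := Finset.card_le_card hF
  rw [hcard] at this
  unfold BrauerConfig.val at hv
  omega

open BrauerConfig in
/-- If `X = {g, g'}` is a Green hyperwalk step of type (G3) in a Brauer
configuration, then the polygons `π g` and `π g'` are distinct truncated edges. -/
theorem g3_step_polygons_distinct_truncated_edges (χ : BrauerConfig)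
    (g g' : χ.G) (h : χ.IsG3 ({g, g'} : Finset χ.G)) (hgg' : g ≠ g') :
    χ.pg g ≠ χ.pg g' ∧ χ.TruncatedEdge (χ.pg g) ∧ χ.TruncatedEdge (χ.pg g') := by
  classical
  obtain ⟨a, b, hab, hG2⟩ := h
  -- {succ g, succ g'} = {succ a, succ b}
  have himg : ({χ.succ g, χ.succ g'} : Finset χ.G) = {χ.succ a, χ.succ b} := by
    have : ({g, g'} : Finset χ.G).image χ.succ = ({a, b} : Finset χ.G).image χ.succ := by
      rw [hab]
    simpa [Finset.image_insert] using this
  rw [← himg] at hG2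
  obtain ⟨_, ⟨p, hsub⟩, hall⟩ := hG2
  have hg := hall (χ.succ g) (by simp)
  have hg' := hall (χ.succ g') (by simp [Finset.mem_insert])
  have hvg : χ.val (χ.vx g) = 2 := by rw [← χ.vx_succ g]; exact hg.2.1
  have hvg' : χ.val (χ.vx g') = 2 := by rw [← χ.vx_succ g']; exact hg'.2.1
  have hteg : χ.TruncatedEdge (χ.pg g) := by
    have := hg.2.2
    rwa [succ_succ_of_val_two χ g hvg] at this
  have hteg' : χ.TruncatedEdge (χ.pg g') := by
    have := hg'.2.2
    rwa [succ_succ_of_val_two χ g' hvg'] at this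
  refine ⟨?_, hteg, hteg'⟩
  intro heq
  obtain ⟨hc2, k, hk, hkv, hkm⟩ := hteg
  -- polyF (pg g) = {g, g'}
  have hmemg : g ∈ χ.polyF (χ.pg g) := by simp [BrauerConfig.polyF]
  have hmemg' : g' ∈ χ.polyF (χ.pg g) := by simp [BrauerConfig.polyF, heq]
  have hsub2 : ({g, g'} : Finset χ.G) ⊆ χ.polyF (χ.pg g) := by
    intro x hx
    rcases Finset.mem_insert.mp hx with rfl | hx
    · exact hmemg
    · rw [Finset.mem_singleton] at hx; subst hx; exact hmemg'
  have hcard2 : ({g, g'} : Finset χ.G).card = 2 := by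
    rw [Finset.card_insert_of_notMem (by simp [hgg']), Finset.card_singleton]
  have hFeq : χ.polyF (χ.pg g) = {g, g'} :=
    (Finset.eq_of_subset_of_card_le hsub2 (by rw [hcard2]; exact le_of_eq hc2)).symm
  have hkmem : k ∈ χ.polyF (χ.pg g) := by simp [BrauerConfig.polyF, hk]
  rw [hFeq] at hkmem
  have hval1 : χ.val (χ.vx k) = 1 := hkv
  rcases Finset.mem_insert.mp hkmem with rfl | hkmem
  · omega
  · rw [Finset.mem_singleton] at hkmem; subst hkmem
    rw [hvg'] at hval1; omega
end

section
/- If (X_j) is a non-terminating Green hyperwalk in a Brauer configuration χ, then every germ g appearing in any step X_i belongs to a polygon of size at most 4. -/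
namespace BrauerConfig

variable (χ : BrauerConfig)

lemma step_card_le (X : Finset χ.G) (h : χ.IsStep X) : X.card ≤ 2 := by
  obtain ⟨-, -, h1 | h2 | h3⟩ := h
  · simp only [IsG1] at h1; omega
  · exact le_of_eq h2.1
  · obtain ⟨g, g', rfl, -⟩ := h3
    exact (Finset.card_insert_le _ _).trans (by simp)

lemma succ_succ_eq (a : χ.G) (hv : χ.val (χ.vx a) = 2) : χ.succ (χ.succ a) = a := by
  classical
  by_cases h : χ.succ a = a
  · rw [h, h]
  · have hFdef : (Finset.univ.filter (fun h => χ.vx h = χ.vx a)) = {a, χ.succ a} := by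
      refine (Finset.eq_of_subset_of_card_le ?_ ?_).symm
      · intro x hx
        simp only [Finset.mem_insert, Finset.mem_singleton] at hx
        rcases hx with rfl | rfl <;> simp [χ.vx_succ]
      · rw [Finset.card_insert_of_notMem (by simp [Ne.symm h]), Finset.card_singleton]
        exact le_of_eq hv
    have hmem : χ.succ (χ.succ a) ∈ ({a, χ.succ a} : Finset _) := by
      rw [← hFdef]; simp [χ.vx_succ]
    simp only [Finset.mem_insert, Finset.mem_singleton] at hmem
    rcases hmem with h1 | h1
    · exact h1
    · exact absurd (χ.succ.injective h1) h

lemma next_spec (X : Finset χ.G) (h : χ.next X ≠ ∅) :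
    χ.IsStep X ∧ χ.IsStep (χ.next X) ∧
    ((χ.IsG3 X ∧ χ.next X = X.image χ.succ) ∨
     (¬ χ.IsG3 X ∧
       χ.next X = ((X.biUnion fun g => χ.polyF (χ.pg g)) \ X).image χ.succ)) := by
  classical
  unfold next at h ⊢
  split_ifs at h ⊢ with h1 h2 h3 h4 <;> simp_all

end BrauerConfig

open BrauerConfig in
/-- If `(X_j)` is a non-terminating Green hyperwalk in a Brauer configuration `χ`,
then every germ appearing in any step `X_i` belongs to a polygon of size at
most 4. -/
theorem nonterminating_walk_polygons_le_four (χ : BrauerConfig)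
    (X0 : Finset χ.G) (hX0 : χ.IsStep X0)
    (hnt : ∀ i, χ.walk X0 i ≠ ∅) :
    ∀ i, ∀ g ∈ χ.walk X0 i, χ.polyCard (χ.pg g) ≤ 4 := by
  intro i g hg
  have hne : χ.next (χ.walk X0 i) ≠ ∅ := by
    have h := hnt (i + 1)
    rwa [walk, Function.iterate_succ_apply', ← walk] at h
  obtain ⟨hX, hYstep, hcase⟩ := χ.next_spec _ hne
  set X := χ.walk X0 i with hXdef
  rcases hcase with ⟨hg3, -⟩ | ⟨hg3, hYeq⟩
  · -- G3 case: polygon of g is a truncated edge, so has size 2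
    obtain ⟨g0, g1, hXeq, hG2⟩ := hg3
    obtain ⟨-, -, hcond⟩ := hG2
    have hmem : χ.succ g ∈ ({χ.succ g0, χ.succ g1} : Finset χ.G) := by
      rw [hXeq] at hg
      simp only [Finset.mem_insert, Finset.mem_singleton] at hg
      rcases hg with rfl | rfl <;> simp
    obtain ⟨-, hval, hte⟩ := hcond _ hmem
    rw [χ.vx_succ] at hval
    rw [χ.succ_succ_eq g hval] at hte
    rw [hte.1]; omega
  · have hcard : (χ.next X).card ≤ 2 := χ.step_card_le _ hYstep
    rw [hYeq, Finset.card_image_of_injective _ χ.succ.injective] at hcard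
    obtain ⟨hne', huniv, hG1 | hG2 | hG3⟩ := hX
    · -- G1 case
      obtain ⟨a, ha⟩ := Finset.card_eq_one.mp hG1
      have hag : a = g := by
        rw [ha] at hg; exact (Finset.mem_singleton.mp hg).symm
      subst hag
      rw [ha] at hcard
      have hmem : a ∈ χ.polyF (χ.pg a) := by simp [polyF]
      rw [Finset.singleton_biUnion,
        Finset.card_sdiff_of_subset (Finset.singleton_subset_iff.mpr hmem),
        Finset.card_singleton] at hcard
      have h2 := χ.two_le_poly (χ.pg a)
      unfold polyCard polyF at *
      omega
    · -- G2 case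
      obtain ⟨hc2, ⟨p, hsub⟩, -⟩ := hG2
      have hXsub : X ⊆ χ.polyF p := hsub.subset
      have hpg : ∀ h ∈ X, χ.pg h = p := fun h hh => by
        have := hXsub hh; simpa [polyF] using this
      have hbi : X.biUnion (fun g => χ.polyF (χ.pg g)) = χ.polyF p := by
        ext x
        simp only [Finset.mem_biUnion]
        constructor
        · rintro ⟨a, ha, hx⟩; rwa [hpg a ha] at hx
        · intro hx; exact ⟨g, hg, by rw [hpg g hg]; exact hx⟩
      rw [hbi, Finset.card_sdiff_of_subset hXsub, hc2] at hcard
      rw [hpg g hg]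
      unfold polyCard
      omega
    · exact absurd hG3 hg3
end

section
/- Let A = KQ/I be an algebra with strings defined as for special multiserial algebras, let w ∈ S_A be a string, and suppose (w_+, w_-) and (z_+, z_-) are two admissible pairs for (w, w) such that w = w_+ w_2 w_- with w_+ = w_-⁻¹ and w = z_+ z_2 z_- with z_+ = z_-⁻¹ (i.e. both pairs have no outer substrings). Then (w_+, w_-) = (z_+, z_-). In other words, the set of admissible pairs of this 'palindromic factorization' type has at most one element. -/
/-- The combinatorial data of a special multiserial algebra `A = KQ/I`:
a finite quiver together with a set of zero relations; strings are walks in the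
quiver avoiding the relations, their inverses, and backtracking. -/
structure SMData where
  /-- vertices of the quiver -/
  V : Type
  /-- arrows of the quiver -/
  E : Type
  [fintypeV : Fintype V]
  [fintypeE : Fintype E]
  [decE : DecidableEq E]
  [decV : DecidableEq V]
  /-- source of an arrow -/
  s : E → V
  /-- target of an arrow -/
  t : E → V
  /-- the zero relations generating the ideal `I` -/
  Z : Set (List E)
  Z_paths : ∀ p ∈ Z, 2 ≤ p.length ∧ p.Chain' (fun α β => t α = s β)
  /-- (SM1): for every arrow `β` there is at most one arrow `γ` with `βγ ∉ I`,
  and at most one arrow `α` with `αβ ∉ I` -/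
  special_left : ∀ β γ γ' : E, t β = s γ → t β = s γ' →
    [β, γ] ∉ Z → [β, γ'] ∉ Z → γ = γ'
  special_right : ∀ β α α' : E, t α = s β → t α' = s β →
    [α, β] ∉ Z → [α', β] ∉ Z → α = α'

namespace SMData

attribute [instance] fintypeV fintypeE decE decV

variable (D : SMData)

/-- Symbols: arrows `(e, true)` and their formal inverses `(e, false)`. -/
abbrev Sym := D.E × Bool

/-- Source of a symbol. -/
def src : D.Sym → D.V
  | (e, true) => D.s e
  | (e, false) => D.t e

/-- Target of a symbol. -/
def tgt : D.Sym → D.V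
  | (e, true) => D.t e
  | (e, false) => D.s e

/-- Formal inverse of a word. -/
def invWord (w : List D.Sym) : List D.Sym :=
  (w.map (fun a => (a.1, !a.2))).reverse

/-- A word is a string if its symbols are consecutively composable with no
backtracking, and no direct (or inverse) subword is a relation. -/
def IsString (w : List D.Sym) : Prop :=
  w.Chain' (fun a b => D.tgt a = D.src b ∧ ¬(b.1 = a.1 ∧ b.2 = !a.2)) ∧
  ∀ p ∈ D.Z,
    ¬ (p.map (fun e => ((e, true) : D.Sym))).IsInfix w ∧
    ¬ (D.invWord (p.map (fun e => ((e, true) : D.Sym)))).IsInfix w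

end SMData


open SMData in
private lemma palin_aux (D : SMData)
    (w wp w2 wm zp z2 zm : List D.Sym)
    (hw : w = wp ++ w2 ++ wm) (hz : w = zp ++ z2 ++ zm)
    (hzinv : zp = D.invWord zm)
    (hwfac : ∃ b, (w2 ++ wm).head? = some b ∧ b.2 = true)
    (hwim : ∃ a, (wp ++ w2).getLast? = some a ∧ a.2 = true)
    (hnw : wm.length = wp.length)
    (hlt : wp.length < zp.length) : False := by
  obtain ⟨b, hb, hbt⟩ := hwfac
  obtain ⟨a, ha, hat⟩ := hwim
  set n := wp.length with hn
  set m := zp.length with hm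
  have hmz : zm.length = m := by
    rw [hzinv] at hm; simpa [SMData.invWord] using hm.symm
  have hL : w.length = m + z2.length + m := by
    rw [hz]; simp [hmz]; omega
  have hLw : w.length = n + w2.length + n := by
    rw [hw]; simp [hnw]; omega
  set L := w.length with hLdef
  -- w[n]? = some b
  have h1 : w[n]? = some b := by
    rw [List.head?_eq_getElem?] at hb
    rw [hw, List.append_assoc, List.getElem?_append_right (le_refl _), Nat.sub_self]
    exact hb
  -- w[L-1-n]? = some a
  have h2 : w[L - 1 - n]? = some a := by
    have hlen : (wp ++ w2).length = L - n := by simp only [List.length_append]; omega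
    rw [hw, List.getElem?_append, if_pos (by rw [hlen]; omega)]
    rw [List.getLast?_eq_getElem?, hlen] at ha
    convert ha using 2
    omega
  -- via zp = invWord zm : w[n]? = (a.1, !a.2)
  have h3 : w[n]? = zp[n]? := by
    rw [hz, List.append_assoc, List.getElem?_append, if_pos (by omega)]
  have h4 : zm[m - 1 - n]? = some a := by
    have hlen : (zp ++ z2).length = L - m := by simp only [List.length_append]; omega
    rw [hz, List.getElem?_append_right (by rw [hlen]; omega), hlen] at h2
    convert h2 using 2
    omega
  have h5 : zp[n]? = some (a.1, !a.2) := by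
    rw [hzinv]
    unfold SMData.invWord
    rw [List.getElem?_reverse (by simp [hmz]; omega), List.getElem?_map]
    simp only [List.length_map, hmz]
    rw [h4]
    rfl
  rw [h3, h5] at h1
  have : b = (a.1, !a.2) := by injection h1.symm
  rw [this, hat] at hbt
  simp at hbt

private lemma invWord_invWord (D : SMData) (u : List D.Sym) :
    D.invWord (D.invWord u) = u := by
  simp [SMData.invWord, List.map_reverse, Function.comp_def]

open SMData in
/-- Let `A = KQ/I` with strings defined as for special multiserial algebras, let
`w` be a string, and suppose `(w₊, w₋)` and `(z₊, z₋)` are admissible pairs for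
`(w, w)` of palindromic factorization type: `w = w₊ w₂ w₋` with `w₊ = w₋⁻¹` and
`w = z₊ z₂ z₋` with `z₊ = z₋⁻¹` (no outer substrings). Then
`(w₊, w₋) = (z₊, z₋)`: this type of admissible pair is unique. -/
theorem palindromic_admissible_pair_unique (D : SMData)
    (w wp w2 wm zp z2 zm : List D.Sym)
    (hstr : D.IsString w)
    (hw : w = wp ++ w2 ++ wm) (hz : w = zp ++ z2 ++ zm)
    (hwinv : wp = D.invWord wm) (hzinv : zp = D.invWord zm)
    -- `w₊` is a factor substring: it is followed by a direct letter (or is all of `w`)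
    (hwfac : w2 ++ wm = [] ∨ ∃ b, (w2 ++ wm).head? = some b ∧ b.2 = true)
    -- `w₋` is an image substring: it is preceded by a direct letter (or is all of `w`)
    (hwim : wp ++ w2 = [] ∨ ∃ a, (wp ++ w2).getLast? = some a ∧ a.2 = true)
    (hzfac : z2 ++ zm = [] ∨ ∃ b, (z2 ++ zm).head? = some b ∧ b.2 = true)
    (hzim : zp ++ z2 = [] ∨ ∃ a, (zp ++ z2).getLast? = some a ∧ a.2 = true) :
    wp = zp ∧ wm = zm ∧ w2 = z2 := by

  have hnw : wm.length = wp.length := by rw [hwinv]; simp [SMData.invWord]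
  have hnz : zm.length = zp.length := by rw [hzinv]; simp [SMData.invWord]
  -- rule out w2++wm = [] when wp shorter than zp, etc.
  have key : wp.length = zp.length := by
    rcases lt_trichotomy wp.length zp.length with h | h | h
    · exfalso
      have hne1 : w2 ++ wm ≠ [] := by
        intro h0
        obtain ⟨ha1, ha2⟩ := List.append_eq_nil_iff.mp h0
        have e1 := congrArg List.length hw
        have e2 := congrArg List.length hz
        simp only [List.length_append] at e1 e2
        have l1 : w2.length = 0 := by simp [ha1]
        have l2 : wm.length = 0 := by simp [ha2]
        omega
      have hne2 : wp ++ w2 ≠ [] := by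
        intro h0
        obtain ⟨ha1, ha2⟩ := List.append_eq_nil_iff.mp h0
        have e1 := congrArg List.length hw
        have e2 := congrArg List.length hz
        simp only [List.length_append] at e1 e2
        have l1 : wp.length = 0 := by simp [ha1]
        have l2 : w2.length = 0 := by simp [ha2]
        omega
      exact palin_aux D w wp w2 wm zp z2 zm hw hz hzinv
        (hwfac.resolve_left hne1) (hwim.resolve_left hne2) hnw h
    · exact h
    · exfalso
      have hne1 : z2 ++ zm ≠ [] := by
        intro h0
        obtain ⟨ha1, ha2⟩ := List.append_eq_nil_iff.mp h0
        have e1 := congrArg List.length hw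
        have e2 := congrArg List.length hz
        simp only [List.length_append] at e1 e2
        have l1 : z2.length = 0 := by simp [ha1]
        have l2 : zm.length = 0 := by simp [ha2]
        omega
      have hne2 : zp ++ z2 ≠ [] := by
        intro h0
        obtain ⟨ha1, ha2⟩ := List.append_eq_nil_iff.mp h0
        have e1 := congrArg List.length hw
        have e2 := congrArg List.length hz
        simp only [List.length_append] at e1 e2
        have l1 : zp.length = 0 := by simp [ha1]
        have l2 : z2.length = 0 := by simp [ha2]
        omega
      exact palin_aux D w zp z2 zm wp w2 wm hz hw hwinv
        (hzfac.resolve_left hne1) (hzim.resolve_left hne2) hnz h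
  have hpre : wp = zp := by
    have p1 : wp <+: w := ⟨w2 ++ wm, by rw [hw, List.append_assoc]⟩
    have p2 : zp <+: w := ⟨z2 ++ zm, by rw [hz, List.append_assoc]⟩
    exact List.IsPrefix.eq_of_length (List.prefix_of_prefix_length_le p1 p2 key.le) key
  have hsuf : wm = zm := by
    have : D.invWord wp = D.invWord zp := by rw [hpre]
    rw [hwinv, hzinv, invWord_invWord, invWord_invWord] at this
    exact this
  refine ⟨hpre, hsuf, ?_⟩
  have := hw.symm.trans hz
  rw [hpre, hsuf, List.append_assoc, List.append_assoc] at this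
  have := List.append_cancel_left this
  exact List.append_cancel_right this
end
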